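/- For the block-exchangeable correlation matrix, the transformed quantity satisfies |V(2) C^n_{21} (C^n_{11})^{-1} V(1)^{-1} sign(γ_{(1)})| = |C^n_{21}(C^n_{11})^{-1} sign(β_{(1)})| · √((1−α_3)/(1−α_1)) · √(((1+(q_n−2)α_1)(1+(r_n−1)α_3) − (q_n−1) r_n α_2²) / ((1+(q_n−1)α_1)(1+(r_n−2)α_3) − q_n (r_n−1) α_2²)) entrywise, where V(k) are the diagonal matrices of conditional standard deviations √(1/d_{jj}). -/

import Mathlib

set_option maxHeartbeats 1000000


open Matrix

/-- The `q×q` exchangeable matrix: `1` on the diagonal, `α` off-diagonal. -/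
noncomputable def exchMat (q : ℕ) (α : ℝ) : Matrix (Fin q) (Fin q) ℝ :=
  Matrix.of fun i j => if i = j then 1 else α

/-- The `r×q` constant matrix with all entries `α`. -/
noncomputable def constMat (r q : ℕ) (α : ℝ) : Matrix (Fin r) (Fin q) ℝ :=
  Matrix.of fun _ _ => α

/-- The block-exchangeable correlation matrix. -/
noncomputable def blockExch (q r : ℕ) (α1 α2 α3 : ℝ) :
    Matrix (Fin q ⊕ Fin r) (Fin q ⊕ Fin r) ℝ :=
  Matrix.fromBlocks (exchMat q α1) (constMat q r α2) (constMat r q α2) (exchMat r α3)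

/-! ### Auxiliary material -/

/-- All-ones matrix. -/
noncomputable def JJ (m n : ℕ) : Matrix (Fin m) (Fin n) ℝ := Matrix.of fun _ _ => 1

lemma JJ_mul_JJ (a b c : ℕ) : JJ a b * JJ b c = (b : ℝ) • JJ a c := by
  ext i k
  simp [JJ, Matrix.mul_apply, Finset.sum_const]

lemma exch_eq (n : ℕ) (α : ℝ) :
    exchMat n α = (1 - α) • (1 : Matrix (Fin n) (Fin n) ℝ) + α • JJ n n := by
  ext i j
  by_cases h : i = j <;> simp [exchMat, JJ, Matrix.one_apply, h]

lemma const_eq (m n : ℕ) (α : ℝ) : constMat m n α = α • JJ m n := by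
  ext i j; simp [constMat, JJ]

lemma sum_ite_const (n : ℕ) (i : Fin n) (A B : ℝ) :
    ∑ k : Fin n, (if i = k then A else B) = A + ((n : ℝ) - 1) * B := by
  have h : ∀ k : Fin n, (if i = k then A else B) = B + (if i = k then A - B else 0) :=
    fun k => by split_ifs <;> ring
  simp only [h, Finset.sum_add_distrib, Finset.sum_const, Finset.sum_ite_eq,
    Finset.mem_univ, if_true, Finset.card_univ, Fintype.card_fin, nsmul_eq_mul]
  ring

lemma quadform (q r : ℕ) (α1 α2 α3 : ℝ) (sv tv : ℝ) :
    dotProduct (Sum.elim (fun _ : Fin q => sv) (fun _ : Fin r => tv))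
      (blockExch q r α1 α2 α3 *ᵥ Sum.elim (fun _ : Fin q => sv) (fun _ : Fin r => tv))
      = (q : ℝ) * (1 + ((q:ℝ)-1)*α1) * sv^2 + 2*(q:ℝ)*(r:ℝ)*α2*sv*tv
        + (r : ℝ) * (1 + ((r:ℝ)-1)*α3) * tv^2 := by
  simp only [blockExch, dotProduct, mulVec, Fintype.sum_sum_type, Sum.elim_inl, Sum.elim_inr,
    fromBlocks_apply₁₁, fromBlocks_apply₁₂, fromBlocks_apply₂₁, fromBlocks_apply₂₂,
    exchMat, constMat, of_apply]
  simp only [← Finset.sum_mul, sum_ite_const, Finset.sum_const, Finset.card_univ,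
    Fintype.card_fin, nsmul_eq_mul, smul_eq_mul]
  ring

lemma blockExch_mul_inv (q r : ℕ) (hq : (q:ℝ) ≠ 0) (hr : (r:ℝ) ≠ 0)
    (α1 α2 α3 : ℝ) (h1 : (1:ℝ) - α1 ≠ 0) (h3 : (1:ℝ) - α3 ≠ 0)
    (d : ℝ) (hd : d = (1 + ((q:ℝ)-1)*α1) * (1 + ((r:ℝ)-1)*α3) - (q:ℝ)*(r:ℝ)*α2^2)
    (hd0 : d ≠ 0) :
    blockExch q r α1 α2 α3 *
      (Matrix.fromBlocks
        ((((1 + ((r:ℝ)-1)*α3)/d - (1-α1)⁻¹)/(q:ℝ)) • JJ q q + (1-α1)⁻¹ • 1)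
        ((-α2/d) • JJ q r)
        ((-α2/d) • JJ r q)
        ((((1 + ((q:ℝ)-1)*α1)/d - (1-α3)⁻¹)/(r:ℝ)) • JJ r r + (1-α3)⁻¹ • 1)) = 1 := by
  rw [blockExch, fromBlocks_multiply, ← fromBlocks_one]
  refine fromBlocks_inj.mpr ⟨?_, ?_, ?_, ?_⟩ <;>
  · simp only [exch_eq, const_eq, Matrix.add_mul, Matrix.mul_add, Matrix.smul_mul,
      Matrix.mul_smul, JJ_mul_JJ, Matrix.one_mul, Matrix.mul_one, smul_smul, smul_add]
    match_scalars
    all_goals (field_simp; all_goals (rw [hd]; ring))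

/-- For the positive definite block-exchangeable correlation matrix with
parameters `α₁` (size `q`), `α₃` (size `r`), `α₂` (cross block), letting `D = C⁻¹` and
`V(1), V(2)` the diagonal matrices of conditional standard deviations `√(1/d_{jj})`,
the transformed quantity satisfies, entrywise,
`|V(2) C_{21} C_{11}⁻¹ V(1)⁻¹ s| = |C_{21} C_{11}⁻¹ s| · √((1−α₃)/(1−α₁)) ·`
`√(((1+(q−2)α₁)(1+(r−1)α₃) − (q−1)r α₂²)/((1+(q−1)α₁)(1+(r−2)α₃) − q(r−1) α₂²))`. -/
theorem stmt11 (q r : ℕ) (hq : 2 ≤ q) (hr : 2 ≤ r)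
    (α1 α2 α3 : ℝ) (hα1 : -1 < α1 ∧ α1 < 1) (hα3 : -1 < α3 ∧ α3 < 1)
    (hpd : (blockExch q r α1 α2 α3).PosDef)
    (s : Fin q → ℝ) (hs : ∀ i, s i = 1 ∨ s i = -1)
    (D : Matrix (Fin q ⊕ Fin r) (Fin q ⊕ Fin r) ℝ)
    (hD : D = (blockExch q r α1 α2 α3)⁻¹)
    (V1 : Matrix (Fin q) (Fin q) ℝ)
    (hV1 : V1 = Matrix.diagonal fun j => Real.sqrt (1 / D (Sum.inl j) (Sum.inl j)))
    (V2 : Matrix (Fin r) (Fin r) ℝ)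
    (hV2 : V2 = Matrix.diagonal fun j => Real.sqrt (1 / D (Sum.inr j) (Sum.inr j))) :
    ∀ i : Fin r,
      |((V2 * (constMat r q α2) * (exchMat q α1)⁻¹ * V1⁻¹) *ᵥ s) i|
        = |((constMat r q α2) *ᵥ ((exchMat q α1)⁻¹ *ᵥ s)) i|
          * Real.sqrt ((1 - α3) / (1 - α1))
          * Real.sqrt
            (((1 + ((q : ℝ) - 2) * α1) * (1 + ((r : ℝ) - 1) * α3) -
                ((q : ℝ) - 1) * (r : ℝ) * α2 ^ 2) /
              ((1 + ((q : ℝ) - 1) * α1) * (1 + ((r : ℝ) - 2) * α3) -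
                (q : ℝ) * ((r : ℝ) - 1) * α2 ^ 2)) := by
  intro i
  obtain ⟨hα1l, hα1u⟩ := hα1
  obtain ⟨hα3l, hα3u⟩ := hα3
  have hq2 : (2:ℝ) ≤ (q:ℝ) := by exact_mod_cast hq
  have hr2 : (2:ℝ) ≤ (r:ℝ) := by exact_mod_cast hr
  have hq0 : (0:ℝ) < (q:ℝ) := by linarith
  have hr0 : (0:ℝ) < (r:ℝ) := by linarith
  have h1 : (0:ℝ) < 1 - α1 := by linarith
  have h3 : (0:ℝ) < 1 - α3 := by linarith
  -- positivity of the exchangeable eigenvalues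
  have hx1 : (Sum.elim (fun _ : Fin q => (1:ℝ)) (fun _ : Fin r => (0:ℝ))) ≠ 0 := by
    intro h
    have := congrFun h (Sum.inl ⟨0, by omega⟩)
    simp at this
  have hK1 : 0 < 1 + ((q:ℝ)-1)*α1 := by
    have h := hpd.dotProduct_mulVec_pos hx1
    rw [star_trivial, quadform] at h
    nlinarith
  have hx3 : (Sum.elim (fun _ : Fin q => (0:ℝ)) (fun _ : Fin r => (1:ℝ))) ≠ 0 := by
    intro h
    have := congrFun h (Sum.inr ⟨0, by omega⟩)
    simp at this
  have hK3 : 0 < 1 + ((r:ℝ)-1)*α3 := by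
    have h := hpd.dotProduct_mulVec_pos hx3
    rw [star_trivial, quadform] at h
    nlinarith
  set Δ : ℝ := (1 + ((q:ℝ)-1)*α1) * (1 + ((r:ℝ)-1)*α3) - (q:ℝ)*(r:ℝ)*α2^2 with hΔdef
  have hxd : (Sum.elim (fun _ : Fin q => -(r:ℝ)*α2) (fun _ : Fin r => 1 + ((q:ℝ)-1)*α1)) ≠ 0 := by
    intro h
    have := congrFun h (Sum.inr ⟨0, by omega⟩)
    simp at this
    linarith
  have hΔ : 0 < Δ := by
    have h := hpd.dotProduct_mulVec_pos hxd
    rw [star_trivial, quadform] at h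
    have hid : (q:ℝ) * (1 + ((q:ℝ)-1)*α1) * (-(r:ℝ)*α2)^2
        + 2*(q:ℝ)*(r:ℝ)*α2*(-(r:ℝ)*α2)*(1 + ((q:ℝ)-1)*α1)
        + (r:ℝ) * (1 + ((r:ℝ)-1)*α3) * (1 + ((q:ℝ)-1)*α1)^2
        = (r:ℝ) * (1 + ((q:ℝ)-1)*α1) * Δ := by rw [hΔdef]; ring
    rw [hid] at h
    by_contra hc
    push_neg at hc
    nlinarith [mul_pos hr0 hK1]
  -- the explicit inverse
  have hCE := blockExch_mul_inv q r hq0.ne' hr0.ne' α1 α2 α3 h1.ne' h3.ne' Δ hΔdef hΔ.ne'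
  have hDE : D = Matrix.fromBlocks
        ((((1 + ((r:ℝ)-1)*α3)/Δ - (1-α1)⁻¹)/(q:ℝ)) • JJ q q + (1-α1)⁻¹ • 1)
        ((-α2/Δ) • JJ q r)
        ((-α2/Δ) • JJ r q)
        ((((1 + ((q:ℝ)-1)*α1)/Δ - (1-α3)⁻¹)/(r:ℝ)) • JJ r r + (1-α3)⁻¹ • 1) := by
    rw [hD]; exact Matrix.inv_eq_right_inv hCE
  set d1 : ℝ := (((1 + ((r:ℝ)-1)*α3)/Δ - (1-α1)⁻¹)/(q:ℝ)) + (1-α1)⁻¹ with hd1def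
  set d2 : ℝ := (((1 + ((q:ℝ)-1)*α1)/Δ - (1-α3)⁻¹)/(r:ℝ)) + (1-α3)⁻¹ with hd2def
  have hd1 : ∀ j : Fin q, D (Sum.inl j) (Sum.inl j) = d1 := by
    intro j
    rw [hDE, hd1def]
    simp [JJ, Matrix.one_apply]
  have hd2 : ∀ j : Fin r, D (Sum.inr j) (Sum.inr j) = d2 := by
    intro j
    rw [hDE, hd2def]
    simp [JJ, Matrix.one_apply]
  have hDpd : D.PosDef := by rw [hD]; exact hpd.inv
  have hd1pos : 0 < d1 := by
    have hx : (Pi.single (Sum.inl ⟨0, by omega⟩) (1:ℝ) : (Fin q ⊕ Fin r) → ℝ) ≠ 0 := by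
      intro h
      have := congrFun h (Sum.inl ⟨0, by omega⟩)
      simp at this
    have h := hDpd.dotProduct_mulVec_pos hx
    rw [star_trivial] at h
    simpa [Matrix.mulVec_single, single_dotProduct, hd1] using h
  have hd2pos : 0 < d2 := by
    have hx : (Pi.single (Sum.inr ⟨0, by omega⟩) (1:ℝ) : (Fin q ⊕ Fin r) → ℝ) ≠ 0 := by
      intro h
      have := congrFun h (Sum.inr ⟨0, by omega⟩)
      simp at this
    have h := hDpd.dotProduct_mulVec_pos hx
    rw [star_trivial] at h
    simpa [Matrix.mulVec_single, single_dotProduct, hd2] using h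
  set Nn : ℝ := (1 + ((q : ℝ) - 2) * α1) * (1 + ((r : ℝ) - 1) * α3) -
      ((q : ℝ) - 1) * (r : ℝ) * α2 ^ 2 with hNdef
  set Dd : ℝ := (1 + ((q : ℝ) - 1) * α1) * (1 + ((r : ℝ) - 2) * α3) -
      (q : ℝ) * ((r : ℝ) - 1) * α2 ^ 2 with hDddef
  have hd1N : d1 = Nn / ((1-α1) * Δ) := by
    rw [hd1def, hNdef]
    field_simp
    rw [hΔdef]
    ring
  have hd2D : d2 = Dd / ((1-α3) * Δ) := by
    rw [hd2def, hDddef]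
    field_simp
    rw [hΔdef]
    ring
  have hNpos : 0 < Nn := by
    have h0 : 0 < Nn / ((1-α1)*Δ) := by rw [← hd1N]; exact hd1pos
    rcases div_pos_iff.mp h0 with ⟨h,_⟩|⟨_,h⟩
    · exact h
    · nlinarith [mul_pos h1 hΔ]
  have hDdpos : 0 < Dd := by
    have h0 : 0 < Dd / ((1-α3)*Δ) := by rw [← hd2D]; exact hd2pos
    rcases div_pos_iff.mp h0 with ⟨h,_⟩|⟨_,h⟩
    · exact h
    · nlinarith [mul_pos h3 hΔ]
  -- the V matrices are scalar
  have hv1 : 0 < Real.sqrt (1/d1) := Real.sqrt_pos.mpr (by positivity)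
  have hv2 : 0 < Real.sqrt (1/d2) := Real.sqrt_pos.mpr (by positivity)
  have hV1' : V1 = Real.sqrt (1/d1) • (1 : Matrix (Fin q) (Fin q) ℝ) := by
    rw [hV1]
    ext j k
    by_cases h : j = k <;> simp [Matrix.diagonal_apply, h, Matrix.one_apply, hd1]
  have hV2' : V2 = Real.sqrt (1/d2) • (1 : Matrix (Fin r) (Fin r) ℝ) := by
    rw [hV2]
    ext j k
    by_cases h : j = k <;> simp [Matrix.diagonal_apply, h, Matrix.one_apply, hd2]
  have hV1inv : V1⁻¹ = (Real.sqrt (1/d1))⁻¹ • (1 : Matrix (Fin q) (Fin q) ℝ) := by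
    apply Matrix.inv_eq_right_inv
    rw [hV1', Matrix.smul_mul, Matrix.mul_smul, smul_smul, Matrix.one_mul,
      mul_inv_cancel₀ hv1.ne', one_smul]
  have hmat : V2 * constMat r q α2 * (exchMat q α1)⁻¹ * V1⁻¹
      = ((Real.sqrt (1/d1))⁻¹ * Real.sqrt (1/d2)) •
          (constMat r q α2 * (exchMat q α1)⁻¹) := by
    rw [hV2', hV1inv, Matrix.smul_mul, Matrix.smul_mul, Matrix.one_mul, Matrix.mul_smul,
      Matrix.mul_one, smul_smul]
  have hc0 : 0 < (Real.sqrt (1/d1))⁻¹ * Real.sqrt (1/d2) := by positivity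
  have hc : (Real.sqrt (1/d1))⁻¹ * Real.sqrt (1/d2)
      = Real.sqrt ((1 - α3) / (1 - α1)) * Real.sqrt (Nn / Dd) := by
    rw [← Real.sqrt_inv, one_div, inv_inv]
    rw [← Real.sqrt_mul hd1pos.le, ← Real.sqrt_mul (div_nonneg h3.le h1.le)]
    congr 1
    rw [hd1N, hd2D]
    field_simp
  rw [hmat, Matrix.smul_mulVec, Matrix.mulVec_mulVec]
  simp only [Pi.smul_apply, smul_eq_mul]
  rw [abs_mul, abs_of_pos hc0, hc]
  ring
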